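/- For any 4×4 Hermitian positive semidefinite matrix ρ with trace 1, C(ρ_A;H_A) + C(ρ_B;H_B) ≤ C(ρ;H₀) where H₀ = E(σ_z⊗I + I⊗σ_z), H_A = H_B = Eσ_z, E > 0: explicitly, 2E√(4|ρ₁₃+ρ₂₄|²+(ρ₁₁+ρ₂₂−ρ₃₃−ρ₄₄)²) + 2E√(4|ρ₁₂+ρ₃₄|²+(ρ₁₁+ρ₃₃−ρ₂₂−ρ₄₄)²) ≤ 4E(λ₃−λ₀), where λ₀ and λ₃ are the smallest and largest eigenvalues of ρ. -/

import Mathlib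

open Matrix
open scoped ComplexOrder
open scoped ComplexConjugate


lemma rayleigh (ρ : Matrix (Fin 4) (Fin 4) ℂ) (hρ : ρ.IsHermitian)
    (e : Fin 4 → ℂ) (he : star e ⬝ᵥ e = 1) :
    (⨅ i, hρ.eigenvalues i) ≤ (star e ⬝ᵥ ρ *ᵥ e).re ∧
      (star e ⬝ᵥ ρ *ᵥ e).re ≤ ⨆ i, hρ.eigenvalues i := by
  classical
  set V : Matrix (Fin 4) (Fin 4) ℂ := (hρ.eigenvectorUnitary : Matrix (Fin 4) (Fin 4) ℂ) with hV
  set w : Fin 4 → ℂ := star V *ᵥ e with hw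
  have hVU : V * Vᴴ = 1 := by
    have := (Matrix.mem_unitaryGroup_iff).mp hρ.eigenvectorUnitary.2
    simpa [Matrix.star_eq_conjTranspose] using this
  have hsw : star w = star e ᵥ* V := by
    rw [hw, Matrix.star_mulVec, Matrix.star_eq_conjTranspose, Matrix.conjTranspose_conjTranspose]
  have hq : star e ⬝ᵥ ρ *ᵥ e = ∑ i, (hρ.eigenvalues i : ℂ) * (conj (w i) * w i) := by
    conv_lhs => rw [hρ.spectral_theorem, Unitary.conjStarAlgAut_apply]
    rw [← hV, ← Matrix.mulVec_mulVec, ← Matrix.mulVec_mulVec, Matrix.dotProduct_mulVec (star e) V,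
      ← hsw]
    simp only [dotProduct, Matrix.mulVec_diagonal, Function.comp, Pi.star_apply,
      RCLike.star_def]
    rw [← hw]
    exact Finset.sum_congr rfl fun i _ => mul_left_comm _ _ _
  have h1 : star w ⬝ᵥ w = 1 := by
    rw [hsw, ← Matrix.dotProduct_mulVec, Matrix.mulVec_mulVec, Matrix.star_eq_conjTranspose,
      hVU, Matrix.one_mulVec, he]
  have hns : ∑ i, Complex.normSq (w i) = 1 := by
    have := congrArg Complex.re h1
    simpa [dotProduct, Complex.mul_conj', Complex.normSq_apply] using this
  have hre : (star e ⬝ᵥ ρ *ᵥ e).re = ∑ i, hρ.eigenvalues i * Complex.normSq (w i) := by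
    rw [hq]
    rw [Complex.re_sum]
    refine Finset.sum_congr rfl fun i _ => ?_
    rw [Complex.conj_mul']
    rw [← Complex.ofReal_pow, ← Complex.ofReal_mul, Complex.ofReal_re, Complex.normSq_eq_norm_sq]
  constructor
  · rw [hre]
    calc (⨅ i, hρ.eigenvalues i) = ∑ j, (⨅ i, hρ.eigenvalues i) * Complex.normSq (w j) := by
          rw [← Finset.mul_sum, hns, mul_one]
      _ ≤ ∑ j, hρ.eigenvalues j * Complex.normSq (w j) := by
          refine Finset.sum_le_sum fun j _ => ?_
          exact mul_le_mul_of_nonneg_right (ciInf_le (Set.Finite.bddBelow (Set.finite_range _)) j)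
            (Complex.normSq_nonneg _)
  · rw [hre]
    calc ∑ j, hρ.eigenvalues j * Complex.normSq (w j)
        ≤ ∑ j, (⨆ i, hρ.eigenvalues i) * Complex.normSq (w j) := by
          refine Finset.sum_le_sum fun j _ => ?_
          exact mul_le_mul_of_nonneg_right (le_ciSup (Set.Finite.bddAbove (Set.finite_range _)) j)
            (Complex.normSq_nonneg _)
      _ = ⨆ i, hρ.eigenvalues i := by rw [← Finset.mul_sum, hns, mul_one]


lemma qubit_params (a : ℝ) (c : ℂ) :
    ∃ s t : ℝ, ∃ ω : ℂ, 0 ≤ s ∧ 0 ≤ t ∧ s ^ 2 + t ^ 2 = 1 ∧ ω * conj ω = 1 ∧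
      c * conj ω = (‖c‖ : ℂ) ∧ conj c * ω = (‖c‖ : ℂ) ∧
      (s ^ 2 - t ^ 2) * a + (2 * s * t) * (2 * ‖c‖)
        = Real.sqrt (4 * ‖c‖ ^ 2 + a ^ 2) := by
  set r := Real.sqrt (4 * ‖c‖ ^ 2 + a ^ 2) with hr
  have hargnn : (0:ℝ) ≤ 4 * ‖c‖ ^ 2 + a ^ 2 := by positivity
  have hr2 : r ^ 2 = 4 * ‖c‖ ^ 2 + a ^ 2 := Real.sq_sqrt hargnn
  have hrnn : 0 ≤ r := Real.sqrt_nonneg _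
  by_cases hr0 : r = 0
  · have h0 : 4 * ‖c‖ ^ 2 + a ^ 2 = 0 := by rw [← hr2, hr0]; ring
    have ha : a = 0 := by nlinarith [norm_nonneg c, sq_nonneg a, sq_nonneg (‖c‖)]
    have hc : ‖c‖ = 0 := by nlinarith [norm_nonneg c]
    have hc' : c = 0 := by simpa using hc
    exact ⟨1, 0, 1, by norm_num, le_refl 0, by norm_num, by norm_num,
      by simp [hc', hc], by simp [hc', hc], by simp [ha, hc, hr0]⟩
  · have hrpos : 0 < r := lt_of_le_of_ne hrnn (Ne.symm hr0)
    set x := a / r with hx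
    set y := 2 * ‖c‖ / r with hy
    have hxy : x ^ 2 + y ^ 2 = 1 := by
      rw [hx, hy, div_pow, div_pow, ← add_div, div_eq_one_iff_eq (pow_pos hrpos 2).ne']
      nlinarith [hr2]
    have hy0 : 0 ≤ y := by positivity
    have hx1 : x ≤ 1 := by nlinarith [sq_nonneg y]
    have hx1' : -1 ≤ x := by nlinarith [sq_nonneg y]
    set s := Real.sqrt ((1 + x) / 2) with hs
    set t := Real.sqrt ((1 - x) / 2) with ht
    have hs2 : s ^ 2 = (1 + x) / 2 := Real.sq_sqrt (by linarith)
    have ht2 : t ^ 2 = (1 - x) / 2 := Real.sq_sqrt (by linarith)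
    have hst : 2 * s * t = y := by
      have : s * t = Real.sqrt (((1 + x) / 2) * ((1 - x) / 2)) :=
        (Real.sqrt_mul (by linarith) _).symm
      have h2 : ((1 + x) / 2) * ((1 - x) / 2) = (y / 2) ^ 2 := by nlinarith [hxy]
      rw [mul_assoc, this, h2, Real.sqrt_sq (by positivity)]
      ring
    refine ⟨s, t, if c = 0 then 1 else c / (‖c‖ : ℂ), Real.sqrt_nonneg _,
      Real.sqrt_nonneg _, by rw [hs2, ht2]; ring, ?_, ?_, ?_, ?_⟩
    · by_cases h : c = 0
      · simp [h]
      · have habs : (‖c‖ : ℂ) ≠ 0 := by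
          simpa using (norm_ne_zero_iff.mpr h)
        rw [if_neg h, map_div₀, Complex.conj_ofReal, div_mul_div_comm, Complex.mul_conj, Complex.normSq_eq_norm_sq]
        push_cast
        field_simp
    · by_cases h : c = 0
      · simp [h]
      · have habs : (‖c‖ : ℂ) ≠ 0 := by simpa using (norm_ne_zero_iff.mpr h)
        rw [if_neg h, map_div₀, Complex.conj_ofReal, mul_div_assoc', Complex.mul_conj, Complex.normSq_eq_norm_sq]
        push_cast
        field_simp
    · by_cases h : c = 0
      · simp [h]
      · have habs : (‖c‖ : ℂ) ≠ 0 := by simpa using (norm_ne_zero_iff.mpr h)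
        rw [if_neg h, mul_div_assoc', mul_comm, Complex.mul_conj, Complex.normSq_eq_norm_sq]
        push_cast
        field_simp
    · rw [hs2, ht2, hst]
      have : (1 + x) / 2 - (1 - x) / 2 = x := by ring
      rw [this, hx, hy]
      field_simp
      nlinarith [hr2]


lemma PT_A (ρ : Matrix (Fin 4) (Fin 4) ℂ) (w0 w1 f0 f1 g0 g1 : ℂ)
    (h00 : conj f0 * f0 + conj g0 * g0 = 1)
    (h01 : conj f0 * f1 + conj g0 * g1 = 0)
    (h10 : conj f1 * f0 + conj g1 * g0 = 0)
    (h11 : conj f1 * f1 + conj g1 * g1 = 1) :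
    star ![w0 * f0, w0 * f1, w1 * f0, w1 * f1] ⬝ᵥ ρ *ᵥ ![w0 * f0, w0 * f1, w1 * f0, w1 * f1]
    + star ![w0 * g0, w0 * g1, w1 * g0, w1 * g1] ⬝ᵥ ρ *ᵥ ![w0 * g0, w0 * g1, w1 * g0, w1 * g1]
    = conj w0 * ((ρ 0 0 + ρ 1 1) * w0 + (ρ 0 2 + ρ 1 3) * w1)
      + conj w1 * ((ρ 2 0 + ρ 3 1) * w0 + (ρ 2 2 + ρ 3 3) * w1) := by
  simp only [dotProduct, Matrix.mulVec, Fin.sum_univ_four, Pi.star_apply,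
    Matrix.cons_val_zero, Matrix.cons_val_one, Matrix.head_cons, Matrix.cons_val_two,
    Matrix.cons_val_three, Matrix.tail_cons, star_mul', RCLike.star_def, _root_.map_mul]
  linear_combination
    (conj w0 * w0 * ρ 0 0 + conj w0 * w1 * ρ 0 2 + conj w1 * w0 * ρ 2 0 + conj w1 * w1 * ρ 2 2) * h00
    + (conj w0 * w0 * ρ 0 1 + conj w0 * w1 * ρ 0 3 + conj w1 * w0 * ρ 2 1 + conj w1 * w1 * ρ 2 3) * h01
    + (conj w0 * w0 * ρ 1 0 + conj w0 * w1 * ρ 1 2 + conj w1 * w0 * ρ 3 0 + conj w1 * w1 * ρ 3 2) * h10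
    + (conj w0 * w0 * ρ 1 1 + conj w0 * w1 * ρ 1 3 + conj w1 * w0 * ρ 3 1 + conj w1 * w1 * ρ 3 3) * h11


lemma PT_B (ρ : Matrix (Fin 4) (Fin 4) ℂ) (w0 w1 f0 f1 g0 g1 : ℂ)
    (h00 : conj f0 * f0 + conj g0 * g0 = 1)
    (h01 : conj f0 * f1 + conj g0 * g1 = 0)
    (h10 : conj f1 * f0 + conj g1 * g0 = 0)
    (h11 : conj f1 * f1 + conj g1 * g1 = 1) :
    star ![f0 * w0, f0 * w1, f1 * w0, f1 * w1] ⬝ᵥ ρ *ᵥ ![f0 * w0, f0 * w1, f1 * w0, f1 * w1]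
    + star ![g0 * w0, g0 * w1, g1 * w0, g1 * w1] ⬝ᵥ ρ *ᵥ ![g0 * w0, g0 * w1, g1 * w0, g1 * w1]
    = conj w0 * ((ρ 0 0 + ρ 2 2) * w0 + (ρ 0 1 + ρ 2 3) * w1)
      + conj w1 * ((ρ 1 0 + ρ 3 2) * w0 + (ρ 1 1 + ρ 3 3) * w1) := by
  simp only [dotProduct, Matrix.mulVec, Fin.sum_univ_four, Pi.star_apply,
    Matrix.cons_val_zero, Matrix.cons_val_one, Matrix.head_cons, Matrix.cons_val_two,
    Matrix.cons_val_three, Matrix.tail_cons, star_mul', RCLike.star_def, _root_.map_mul]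
  linear_combination
    (conj w0 * w0 * ρ 0 0 + conj w0 * w1 * ρ 0 1 + conj w1 * w0 * ρ 1 0 + conj w1 * w1 * ρ 1 1) * h00
    + (conj w0 * w0 * ρ 0 2 + conj w0 * w1 * ρ 0 3 + conj w1 * w0 * ρ 1 2 + conj w1 * w1 * ρ 1 3) * h01
    + (conj w0 * w0 * ρ 2 0 + conj w0 * w1 * ρ 2 1 + conj w1 * w0 * ρ 3 0 + conj w1 * w1 * ρ 3 1) * h10
    + (conj w0 * w0 * ρ 2 2 + conj w0 * w1 * ρ 2 3 + conj w1 * w0 * ρ 3 2 + conj w1 * w1 * ρ 3 3) * h11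

lemma norm_one4 (w0 w1 f0 f1 : ℂ)
    (hw : conj w0 * w0 + conj w1 * w1 = 1) (hf : conj f0 * f0 + conj f1 * f1 = 1) :
    star ![w0 * f0, w0 * f1, w1 * f0, w1 * f1] ⬝ᵥ ![w0 * f0, w0 * f1, w1 * f0, w1 * f1] = 1 := by
  simp only [dotProduct, Fin.sum_univ_four, Pi.star_apply,
    Matrix.cons_val_zero, Matrix.cons_val_one, Matrix.head_cons, Matrix.cons_val_two,
    Matrix.cons_val_three, Matrix.tail_cons, star_mul', RCLike.star_def, _root_.map_mul]
  linear_combination (conj f0 * f0 + conj f1 * f1) * hw + hf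

/-- Trade-off for the longitudinal non-interacting field: the sum of the explicit
subsystem capacities is bounded by the total capacity `4E(λ₃−λ₀)`. -/
theorem stmt_19
    (ρ : Matrix (Fin 4) (Fin 4) ℂ)
    (hρ : ρ.IsHermitian) (hpos : ρ.PosSemidef) (htr : ρ.trace = 1)
    (E : ℝ) (hE : 0 < E) :
    2 * E * Real.sqrt (4 * ‖ρ 0 2 + ρ 1 3‖ ^ 2 +
        ((ρ 0 0).re + (ρ 1 1).re - (ρ 2 2).re - (ρ 3 3).re) ^ 2)
    + 2 * E * Real.sqrt (4 * ‖ρ 0 1 + ρ 2 3‖ ^ 2 +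
        ((ρ 0 0).re + (ρ 2 2).re - (ρ 1 1).re - (ρ 3 3).re) ^ 2)
      ≤ 4 * E * ((⨆ i, hρ.eigenvalues i) - ⨅ i, hρ.eigenvalues i) := by
  classical
  have herm : ∀ i j, ρ j i = conj (ρ i j) := by
    intro i j
    conv_lhs => rw [← hρ]
    simp [Matrix.conjTranspose_apply]
  have hdiag : ∀ i, ρ i i = ((ρ i i).re : ℂ) :=
    fun i => (Complex.conj_eq_iff_re.mp (herm i i).symm).symm
  set a : ℝ := (ρ 0 0).re + (ρ 1 1).re - (ρ 2 2).re - (ρ 3 3).re with ha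
  set b : ℝ := (ρ 0 0).re + (ρ 2 2).re - (ρ 1 1).re - (ρ 3 3).re with hb
  set cA : ℂ := ρ 0 2 + ρ 1 3 with hcA
  set cB : ℂ := ρ 0 1 + ρ 2 3 with hcB
  set rA : ℝ := Real.sqrt (4 * ‖cA‖ ^ 2 + a ^ 2) with hrA
  set rB : ℝ := Real.sqrt (4 * ‖cB‖ ^ 2 + b ^ 2) with hrB
  obtain ⟨s, t, ω, hs0, ht0, h1, hω, hcω, hcω', hval⟩ := qubit_params a cA
  obtain ⟨s', t', ω', hs0', ht0', h1', hω', hcω2, hcω2', hval'⟩ := qubit_params b cB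
  -- complex versions
  have h1C : (s : ℂ) ^ 2 + (t : ℂ) ^ 2 = 1 := by exact_mod_cast congrArg Complex.ofReal h1
  have h1C' : (s' : ℂ) ^ 2 + (t' : ℂ) ^ 2 = 1 := by exact_mod_cast congrArg Complex.ofReal h1'
  -- the qubit vectors
  set u0 : ℂ := (s : ℂ) with hu0
  set u1 : ℂ := (t : ℂ) * conj ω with hu1
  set v0 : ℂ := -(t : ℂ) with hv0
  set v1 : ℂ := (s : ℂ) * conj ω with hv1
  set p0 : ℂ := (s' : ℂ) with hp0
  set p1 : ℂ := (t' : ℂ) * conj ω' with hp1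
  set q0 : ℂ := -(t' : ℂ) with hq0
  set q1v : ℂ := (s' : ℂ) * conj ω' with hq1v
  have comp : ∀ (sx tx : ℝ) (ωx : ℂ), (sx:ℂ)^2 + (tx:ℂ)^2 = 1 → ωx * conj ωx = 1 →
      (conj ((sx:ℂ)) * (sx:ℂ) + conj (-(tx:ℂ)) * (-(tx:ℂ)) = 1) ∧
      (conj ((sx:ℂ)) * ((tx:ℂ) * conj ωx) + conj (-(tx:ℂ)) * ((sx:ℂ) * conj ωx) = 0) ∧
      (conj ((tx:ℂ) * conj ωx) * (sx:ℂ) + conj ((sx:ℂ) * conj ωx) * (-(tx:ℂ)) = 0) ∧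
      (conj ((tx:ℂ) * conj ωx) * ((tx:ℂ) * conj ωx) + conj ((sx:ℂ) * conj ωx) * ((sx:ℂ) * conj ωx) = 1) := by
    intro sx tx ωx hx hωx
    refine ⟨?_, ?_, ?_, ?_⟩ <;>
      simp only [_root_.map_mul, Complex.conj_ofReal, map_neg, Complex.conj_conj] <;>
      [linear_combination hx; ring; ring; linear_combination (ωx * conj ωx) * hx + hωx]
  obtain ⟨cA00, cA01, cA10, cA11⟩ := comp s t ω h1C hω
  obtain ⟨cB00, cB01, cB10, cB11⟩ := comp s' t' ω' h1C' hω'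
  -- unit-norm facts
  have hun : conj u0 * u0 + conj u1 * u1 = 1 := by
    rw [hu0, hu1]
    simp only [_root_.map_mul, Complex.conj_ofReal, Complex.conj_conj]
    linear_combination h1C + (t:ℂ)^2 * hω
  have hvn : conj v0 * v0 + conj v1 * v1 = 1 := by
    rw [hv0, hv1]
    simp only [_root_.map_mul, Complex.conj_ofReal, map_neg, Complex.conj_conj]
    linear_combination h1C + (s:ℂ)^2 * hω
  have hpn : conj p0 * p0 + conj p1 * p1 = 1 := by
    rw [hp0, hp1]
    simp only [_root_.map_mul, Complex.conj_ofReal, Complex.conj_conj]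
    linear_combination h1C' + (t':ℂ)^2 * hω'
  have hqn : conj q0 * q0 + conj q1v * q1v = 1 := by
    rw [hq0, hq1v]
    simp only [_root_.map_mul, Complex.conj_ofReal, map_neg, Complex.conj_conj]
    linear_combination h1C' + (s':ℂ)^2 * hω'
  -- the four 4-dim quadratic forms
  set Q1 : ℂ := star ![u0 * p0, u0 * p1, u1 * p0, u1 * p1] ⬝ᵥ ρ *ᵥ ![u0 * p0, u0 * p1, u1 * p0, u1 * p1] with hQ1
  set Q2 : ℂ := star ![u0 * q0, u0 * q1v, u1 * q0, u1 * q1v] ⬝ᵥ ρ *ᵥ ![u0 * q0, u0 * q1v, u1 * q0, u1 * q1v] with hQ2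
  set Q3 : ℂ := star ![v0 * p0, v0 * p1, v1 * p0, v1 * p1] ⬝ᵥ ρ *ᵥ ![v0 * p0, v0 * p1, v1 * p0, v1 * p1] with hQ3
  set Q4 : ℂ := star ![v0 * q0, v0 * q1v, v1 * q0, v1 * q1v] ⬝ᵥ ρ *ᵥ ![v0 * q0, v0 * q1v, v1 * q0, v1 * q1v] with hQ4
  have hA1 := PT_A ρ u0 u1 p0 p1 q0 q1v cB00 cB01 cB10 cB11
  have hA2 := PT_A ρ v0 v1 p0 p1 q0 q1v cB00 cB01 cB10 cB11
  have hB1 := PT_B ρ p0 p1 u0 u1 v0 v1 cA00 cA01 cA10 cA11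
  have hB2 := PT_B ρ q0 q1v u0 u1 v0 v1 cA00 cA01 cA10 cA11
  rw [← hQ1, ← hQ2] at hA1
  rw [← hQ3, ← hQ4] at hA2
  rw [← hQ1, ← hQ3] at hB1
  rw [← hQ2, ← hQ4] at hB2
  have hcombine : 2 * (Q1 - Q4)
      = (conj u0 * ((ρ 0 0 + ρ 1 1) * u0 + (ρ 0 2 + ρ 1 3) * u1)
          + conj u1 * ((ρ 2 0 + ρ 3 1) * u0 + (ρ 2 2 + ρ 3 3) * u1))
        - (conj v0 * ((ρ 0 0 + ρ 1 1) * v0 + (ρ 0 2 + ρ 1 3) * v1)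
          + conj v1 * ((ρ 2 0 + ρ 3 1) * v0 + (ρ 2 2 + ρ 3 3) * v1))
        + ((conj p0 * ((ρ 0 0 + ρ 2 2) * p0 + (ρ 0 1 + ρ 2 3) * p1)
          + conj p1 * ((ρ 1 0 + ρ 3 2) * p0 + (ρ 1 1 + ρ 3 3) * p1))
        - (conj q0 * ((ρ 0 0 + ρ 2 2) * q0 + (ρ 0 1 + ρ 2 3) * q1v)
          + conj q1v * ((ρ 1 0 + ρ 3 2) * q0 + (ρ 1 1 + ρ 3 3) * q1v))) := by
    linear_combination hA1 - hA2 + hB1 - hB2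
  have hvalC : ((s:ℂ) ^ 2 - (t:ℂ) ^ 2) * ((ρ 0 0).re + (ρ 1 1).re - (ρ 2 2).re - (ρ 3 3).re : ℝ)
      + (2 * (s:ℂ) * (t:ℂ)) * (2 * (‖cA‖ : ℝ)) = (rA : ℂ) := by
    rw [hrA]; exact_mod_cast congrArg Complex.ofReal hval
  have hvalC' : ((s':ℂ) ^ 2 - (t':ℂ) ^ 2) * ((ρ 0 0).re + (ρ 2 2).re - (ρ 1 1).re - (ρ 3 3).re : ℝ)
      + (2 * (s':ℂ) * (t':ℂ)) * (2 * (‖cB‖ : ℝ)) = (rB : ℂ) := by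
    rw [hrB]; exact_mod_cast congrArg Complex.ofReal hval'
  have hRA : (conj u0 * ((ρ 0 0 + ρ 1 1) * u0 + (ρ 0 2 + ρ 1 3) * u1)
          + conj u1 * ((ρ 2 0 + ρ 3 1) * u0 + (ρ 2 2 + ρ 3 3) * u1))
        - (conj v0 * ((ρ 0 0 + ρ 1 1) * v0 + (ρ 0 2 + ρ 1 3) * v1)
          + conj v1 * ((ρ 2 0 + ρ 3 1) * v0 + (ρ 2 2 + ρ 3 3) * v1)) = (rA : ℂ) := by
    rw [hu0, hu1, hv0, hv1, herm 0 2, herm 1 3, hdiag 0, hdiag 1, hdiag 2, hdiag 3]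
    simp only [_root_.map_mul, Complex.conj_ofReal, map_neg, Complex.conj_conj]
    have hcωC : cA * conj ω = (‖cA‖ : ℂ) := hcω
    have hcωC' : conj cA * ω = (‖cA‖ : ℂ) := hcω'
    rw [hcA] at hcωC hcωC'
    have hconjadd : conj (ρ 0 2) + conj (ρ 1 3) = conj (ρ 0 2 + ρ 1 3) := (map_add _ _ _).symm
    have hcωD : (conj (ρ 0 2) + conj (ρ 1 3)) * ω = (‖ρ 0 2 + ρ 1 3‖ : ℂ) := by
      rw [hconjadd]; exact hcωC'
    push_cast at hvalC ⊢
    linear_combination hvalC - (((ρ 2 2).re : ℂ) + ((ρ 3 3).re : ℂ)) * ((s:ℂ)^2 - (t:ℂ)^2) * hω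
      + 2 * (s:ℂ) * (t:ℂ) * hcωC + 2 * (s:ℂ) * (t:ℂ) * hcωD
  have hRB : (conj p0 * ((ρ 0 0 + ρ 2 2) * p0 + (ρ 0 1 + ρ 2 3) * p1)
          + conj p1 * ((ρ 1 0 + ρ 3 2) * p0 + (ρ 1 1 + ρ 3 3) * p1))
        - (conj q0 * ((ρ 0 0 + ρ 2 2) * q0 + (ρ 0 1 + ρ 2 3) * q1v)
          + conj q1v * ((ρ 1 0 + ρ 3 2) * q0 + (ρ 1 1 + ρ 3 3) * q1v)) = (rB : ℂ) := by
    rw [hp0, hp1, hq0, hq1v, herm 0 1, herm 2 3, hdiag 0, hdiag 1, hdiag 2, hdiag 3]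
    simp only [_root_.map_mul, Complex.conj_ofReal, map_neg, Complex.conj_conj]
    have hcωC : cB * conj ω' = (‖cB‖ : ℂ) := hcω2
    have hcωC' : conj cB * ω' = (‖cB‖ : ℂ) := hcω2'
    rw [hcB] at hcωC hcωC'
    have hconjadd : conj (ρ 0 1) + conj (ρ 2 3) = conj (ρ 0 1 + ρ 2 3) := (map_add _ _ _).symm
    have hcωD : (conj (ρ 0 1) + conj (ρ 2 3)) * ω' = (‖ρ 0 1 + ρ 2 3‖ : ℂ) := by
      rw [hconjadd]; exact hcωC'
    push_cast at hvalC' ⊢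
    linear_combination hvalC' - (((ρ 1 1).re : ℂ) + ((ρ 3 3).re : ℂ)) * ((s':ℂ)^2 - (t':ℂ)^2) * hω'
      + 2 * (s':ℂ) * (t':ℂ) * hcωC + 2 * (s':ℂ) * (t':ℂ) * hcωD
  have h3 : Q1 - Q4 = (((rA + rB) / 2 : ℝ) : ℂ) := by
    push_cast
    linear_combination (hcombine.trans (by rw [hRA, hRB])) / 2
  have hre : Q1.re - Q4.re = (rA + rB) / 2 := by
    have := congrArg Complex.re h3
    simpa [Complex.sub_re, Complex.ofReal_re] using this
  have hn1 := norm_one4 u0 u1 p0 p1 hun hpn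
  have hn4 := norm_one4 v0 v1 q0 q1v hvn hqn
  have hr1 := (rayleigh ρ hρ _ hn1).2
  have hr4 := (rayleigh ρ hρ _ hn4).1
  rw [← hQ1] at hr1
  rw [← hQ4] at hr4
  have key : rA + rB ≤ 2 * ((⨆ i, hρ.eigenvalues i) - ⨅ i, hρ.eigenvalues i) := by
    linarith
  nlinarith [mul_le_mul_of_nonneg_left key hE.le]
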